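/- Let E be a nonempty finite type, let T > 0, and let Q : ℝ → Matrix E E ℝ be continuous on [0,T] and satisfy, for every t ∈ [0,T]: Q(t)(e,e') ≥ 0 whenever e ≠ e', and ∑_{e'} Q(t)(e,e') = 0 for every e. Suppose p : ℝ → (E → ℝ) is differentiable on [0,T] with derivative p'(t) = p(t) ᵥ* Q(t) (i.e., p'(t)(e') = ∑_e p(t)(e)·Q(t)(e,e') for every e') for all t ∈ [0,T], and p(0) is a probability vector (p(0)(e) ≥ 0 for all e and ∑_e p(0)(e) = 1). Then for every t ∈ [0,T], p(t) is a probability vector: p(t)(e) ≥ 0 for all e ∈ E and ∑_e p(t)(e) = 1. -/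

import Mathlib

open Set Filter Topology

/-- The Kolmogorov–Fokker–Planck forward flow `dp/dt = p ᵥ* Q(t)` with a
continuous rate matrix having nonnegative off-diagonal entries and zero row sums
preserves the probability simplex on the finite state space `E`. -/
theorem kfp_preserves_simplex {E : Type*} [Fintype E] [Nonempty E] [DecidableEq E]
    (T : ℝ) (hT : 0 < T)
    (Q : ℝ → Matrix E E ℝ) (hQcont : ContinuousOn Q (Icc 0 T))
    (hQoff : ∀ t ∈ Icc (0:ℝ) T, ∀ e e' : E, e ≠ e' → 0 ≤ Q t e e')
    (hQrow : ∀ t ∈ Icc (0:ℝ) T, ∀ e : E, ∑ e', Q t e e' = 0)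
    (p : ℝ → E → ℝ)
    (hp : ∀ t ∈ Icc (0:ℝ) T, HasDerivWithinAt p (Matrix.vecMul (p t) (Q t)) (Icc 0 T) t)
    (hp0_nonneg : ∀ e, 0 ≤ p 0 e) (hp0_sum : ∑ e, p 0 e = 1) :
    ∀ t ∈ Icc (0:ℝ) T, (∀ e, 0 ≤ p t e) ∧ ∑ e, p t e = 1 := by
  -- coordinate derivatives and continuity
  have hpcoord : ∀ (e : E), ∀ t ∈ Icc (0:ℝ) T,
      HasDerivWithinAt (fun s => p s e) (Matrix.vecMul (p t) (Q t) e) (Icc 0 T) t :=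
    fun e t ht => hasDerivWithinAt_pi.mp (hp t ht) e
  have hpcont : ∀ e : E, ContinuousOn (fun s => p s e) (Icc 0 T) :=
    fun e t ht => (hpcoord e t ht).continuousWithinAt
  have hQe : ∀ e e' : E, ContinuousOn (fun t => Q t e e') (Icc 0 T) := by
    intro e e'
    exact ((continuous_apply e').comp (continuous_apply e)).comp_continuousOn hQcont
  -- a uniform bound on the entries of Q
  obtain ⟨C, hC⟩ : ∃ C, ∀ t ∈ Icc (0:ℝ) T, ‖∑ e : E, ∑ e' : E, |Q t e e'|‖ ≤ C :=
    isCompact_Icc.exists_bound_of_continuousOn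
      (continuousOn_finset_sum _ fun e _ =>
        continuousOn_finset_sum _ fun e' _ => (hQe e e').abs)
  have hCb : ∀ t ∈ Icc (0:ℝ) T, ∀ e e' : E, |Q t e e'| ≤ C := by
    intro t ht e e'
    have h1 : |Q t e e'| ≤ ∑ e'' : E, |Q t e e''| :=
      Finset.single_le_sum (f := fun e'' => |Q t e e''|) (fun i _ => abs_nonneg _)
        (Finset.mem_univ e')
    have h2 : (∑ e'' : E, |Q t e e''|) ≤ ∑ a : E, ∑ e'' : E, |Q t a e''| :=
      Finset.single_le_sum (f := fun a => ∑ e'' : E, |Q t a e''|)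
        (fun i _ => Finset.sum_nonneg fun j _ => abs_nonneg _) (Finset.mem_univ e)
    have h3 := hC t ht
    rw [Real.norm_eq_abs] at h3
    have h4 := le_abs_self (∑ e : E, ∑ e' : E, |Q t e e'|)
    linarith
  have hC0 : 0 ≤ C := by
    obtain ⟨e⟩ := (inferInstance : Nonempty E)
    have := hCb 0 ⟨le_rfl, hT.le⟩ e e
    have := abs_nonneg (Q 0 e e)
    linarith
  set n : ℝ := (Fintype.card E : ℝ) with hn
  set K : ℝ := n * C + C + 1 with hK
  -- the key positivity estimate
  have key : ∀ ε : ℝ, 0 < ε → ∀ t ∈ Icc (0:ℝ) T, ∀ e : E,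
      0 < Real.exp (C*t) * p t e + ε * Real.exp (K*t) := by
    intro ε hε
    set g : ℝ → E → ℝ := fun t e => Real.exp (C*t) * p t e + ε * Real.exp (K*t) with hg
    have hgcont : ∀ e : E, ContinuousOn (fun t => g t e) (Icc 0 T) := by
      intro e
      apply ContinuousOn.add
      · exact ((Real.continuous_exp.comp (continuous_const.mul continuous_id)).continuousOn).mul
          (hpcont e)
      · exact continuousOn_const.mul
          ((Real.continuous_exp.comp (continuous_const.mul continuous_id)).continuousOn)
    have hgderiv : ∀ t ∈ Icc (0:ℝ) T, ∀ e : E,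
        HasDerivWithinAt (fun u => g u e)
          ((∑ e'' : E, (Real.exp (C*t) * p t e'') * (Q t e'' e + if e'' = e then C else 0))
            + ε * Real.exp (K*t) * K) (Icc 0 T) t := by
      intro t ht e
      have h1 : HasDerivWithinAt (fun u => Real.exp (C*u) * p u e)
          ((Real.exp (C*t) * (C*1)) * p t e + Real.exp (C*t) * (Matrix.vecMul (p t) (Q t) e))
          (Icc 0 T) t :=
        (((hasDerivAt_id t).const_mul C).exp.hasDerivWithinAt).mul (hpcoord e t ht)
      have h2 : HasDerivWithinAt (fun u => ε * Real.exp (K*u))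
          (ε * (Real.exp (K*t) * (K*1))) (Icc 0 T) t :=
        (((hasDerivAt_id t).const_mul K).exp.hasDerivWithinAt).const_mul ε
      convert h1.add h2 using 1
      case e'_4 => rfl
      case e'_5 => rfl
      case e'_8 => rfl
      have hv : Matrix.vecMul (p t) (Q t) e = ∑ e'' : E, p t e'' * Q t e'' e := by
        simp [Matrix.vecMul, dotProduct]
      rw [hv]
      have hsplit : (∑ e'' : E, (Real.exp (C*t) * p t e'') * (Q t e'' e + if e'' = e then C else 0))
          = Real.exp (C*t) * (∑ e'' : E, p t e'' * Q t e'' e) + Real.exp (C*t) * p t e * C := by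
        simp only [mul_add]
        rw [Finset.sum_add_distrib]
        congr 1
        · rw [Finset.mul_sum]
          exact Finset.sum_congr rfl fun i _ => by ring
        · simp [mul_ite, mul_zero]
      rw [hsplit]
      ring
    by_contra hcon
    push_neg at hcon
    obtain ⟨t₀, ht₀, e₀, he₀⟩ := hcon
    set S : Set ℝ := {t | t ∈ Icc (0:ℝ) T ∧ ∃ e, g t e ≤ 0} with hS
    have hSne : S.Nonempty := ⟨t₀, ht₀, e₀, he₀⟩
    have hSclosed : IsClosed S := by
      have hrw : S = ⋃ e : E, (Icc (0:ℝ) T ∩ (fun t => g t e) ⁻¹' Iic 0) := by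
        ext t
        simp only [hS, mem_setOf_eq, mem_iUnion, mem_inter_iff, mem_preimage, mem_Iic]
        tauto
      rw [hrw]
      exact isClosed_iUnion_of_finite fun e =>
        (hgcont e).preimage_isClosed_of_isClosed isClosed_Icc isClosed_Iic
    have hSbdd : BddBelow S := ⟨0, fun x hx => hx.1.1⟩
    set s := sInf S with hs
    have hsS : s ∈ S := hSclosed.csInf_mem hSne hSbdd
    obtain ⟨hsIcc, e', he'⟩ := hsS
    have hs0 : 0 < s := by
      rcases hsIcc.1.lt_or_eq with h | h
      · exact h
      · exfalso
        have hgz : g 0 e' ≤ 0 := by rw [← h] at he'; exact he'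
        have : g 0 e' = p 0 e' + ε := by simp [hg]
        have := hp0_nonneg e'
        linarith [hgz, this, hε]
    have hpos : ∀ t : ℝ, 0 ≤ t → t < s → ∀ e, 0 < g t e := by
      intro t h0 hts e
      by_contra hle
      push_neg at hle
      have htS : t ∈ S := ⟨⟨h0, hts.le.trans hsIcc.2⟩, e, hle⟩
      exact absurd (csInf_le hSbdd htS) (not_le.mpr hts)
    haveI hne : (𝓝[Ico (0:ℝ) s] s).NeBot := right_nhdsWithin_Ico_neBot hs0
    have hge0 : ∀ e : E, 0 ≤ g s e := by
      intro e
      have hct : Filter.Tendsto (fun t => g t e) (𝓝[Ico (0:ℝ) s] s) (𝓝 (g s e)) :=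
        ((hgcont e) s hsIcc).mono fun x hx => ⟨hx.1, hx.2.le.trans hsIcc.2⟩
      exact ge_of_tendsto hct
        (eventually_nhdsWithin_of_forall fun t ht => (hpos t ht.1 ht.2 e).le)
    have hse' : g s e' = 0 := le_antisymm he' (hge0 e')
    set x : ℝ := ε * Real.exp (K*s) with hxdef
    have hxpos : 0 < x := mul_pos hε (Real.exp_pos _)
    have hterm : ∀ e'' : E, -x ≤ Real.exp (C*s) * p s e'' := by
      intro e''
      have h := hge0 e''
      have : g s e'' = Real.exp (C*s) * p s e'' + x := rfl
      linarith [h, this.symm.le]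
    have hApos : ∀ e'' : E, 0 ≤ Q s e'' e' + if e'' = e' then C else 0 := by
      intro e''
      by_cases hcase : e'' = e'
      · subst hcase
        have habs := hCb s hsIcc e'' e''
        have h1 := (abs_le.mp habs).1
        simp only [if_true, eq_self_iff_true, if_pos]
        linarith
      · simp only [if_neg hcase, add_zero]
        exact hQoff s hsIcc _ _ hcase
    have hAcol : (∑ e'' : E, (Q s e'' e' + if e'' = e' then C else 0)) ≤ n * C + C := by
      rw [Finset.sum_add_distrib]
      have h1 : (∑ e'' : E, Q s e'' e') ≤ n * C := by
        calc (∑ e'' : E, Q s e'' e') ≤ ∑ e'' : E, |Q s e'' e'| :=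
              Finset.sum_le_sum fun i _ => le_abs_self _
          _ ≤ ∑ _e'' : E, C := Finset.sum_le_sum fun i _ => hCb s hsIcc i e'
          _ = n * C := by simp [Finset.sum_const, nsmul_eq_mul, hn]
      have h2 : (∑ e'' : E, (if e'' = e' then C else 0)) = C := by simp
      linarith
    set D : ℝ := (∑ e'' : E, (Real.exp (C*s) * p s e'') * (Q s e'' e' + if e'' = e' then C else 0))
        + ε * Real.exp (K*s) * K with hD
    have hDpos : 0 < D := by
      have hsum_ge : -x * (n * C + C)
          ≤ ∑ e'' : E, (Real.exp (C*s) * p s e'') * (Q s e'' e' + if e'' = e' then C else 0) := by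
        calc -x * (n * C + C) ≤ -x * ∑ e'' : E, (Q s e'' e' + if e'' = e' then C else 0) :=
              mul_le_mul_of_nonpos_left hAcol (by linarith)
          _ = ∑ e'' : E, (-x) * (Q s e'' e' + if e'' = e' then C else 0) := Finset.mul_sum _ _ _
          _ ≤ ∑ e'' : E, (Real.exp (C*s) * p s e'') * (Q s e'' e' + if e'' = e' then C else 0) :=
              Finset.sum_le_sum fun i _ => mul_le_mul_of_nonneg_right (hterm i) (hApos i)
      have hxx : ε * Real.exp (K*s) * K = x * K := by rw [hxdef]
      have hfin : -x * (n * C + C) + x * K = x := by rw [hK]; ring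
      rw [hD, hxx]
      linarith
    -- slope argument: the derivative at s from the left is nonpositive
    have hDs : HasDerivWithinAt (fun u => g u e') D (Icc 0 s) s :=
      ((hgderiv s hsIcc e').mono (Icc_subset_Icc_right hsIcc.2))
    have hslope := hasDerivWithinAt_iff_tendsto_slope.mp hDs
    rw [show Icc (0:ℝ) s \ {s} = Ico 0 s by rw [Icc_sdiff_right]] at hslope
    have hDle : D ≤ 0 := by
      refine le_of_tendsto hslope (eventually_nhdsWithin_of_forall fun t ht => ?_)
      rw [slope_def_field, hse', sub_zero]
      exact div_nonpos_of_nonneg_of_nonpos (hpos t ht.1 ht.2 e').le (by linarith [ht.2])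
    linarith
  -- nonnegativity
  have hnonneg : ∀ t ∈ Icc (0:ℝ) T, ∀ e : E, 0 ≤ p t e := by
    intro t ht e
    have hx : 0 ≤ Real.exp (C*t) * p t e := by
      by_contra hxneg
      push_neg at hxneg
      set y := Real.exp (K*t) with hy
      have hy0 : 0 < y := Real.exp_pos _
      have hεpos : 0 < (-(Real.exp (C*t) * p t e)) / (2*y) :=
        div_pos (by linarith) (by linarith)
      have hkey := key _ hεpos t ht e
      have hid : (-(Real.exp (C*t) * p t e)) / (2*y) * y = -(Real.exp (C*t) * p t e) / 2 := by
        field_simp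
      rw [hid] at hkey
      linarith
    have hexp : 0 < Real.exp (C*t) := Real.exp_pos _
    exact (mul_nonneg_iff_of_pos_left hexp).mp hx
  -- the sum is preserved
  have hsum : ∀ t ∈ Icc (0:ℝ) T, ∑ e, p t e = 1 := by
    have hcont : ContinuousOn (fun t => ∑ e, p t e) (Icc 0 T) :=
      continuousOn_finset_sum _ fun e _ => hpcont e
    have hderiv : ∀ t ∈ Ico (0:ℝ) T, HasDerivWithinAt (fun t => ∑ e, p t e) 0 (Ici t) t := by
      intro t ht
      have h1 : HasDerivWithinAt (fun t => ∑ e, p t e) (∑ e, Matrix.vecMul (p t) (Q t) e)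
          (Icc 0 T) t := HasDerivWithinAt.fun_sum fun e _ => hpcoord e t (Ico_subset_Icc_self ht)
      have h2 : (∑ e, Matrix.vecMul (p t) (Q t) e) = 0 := by
        simp only [Matrix.vecMul, dotProduct]
        rw [Finset.sum_comm]
        calc (∑ e : E, ∑ e' : E, p t e * Q t e e')
            = ∑ e : E, p t e * ∑ e' : E, Q t e e' := by
              exact Finset.sum_congr rfl fun i _ => (Finset.mul_sum _ _ _).symm
          _ = 0 := by
              rw [Finset.sum_eq_zero]
              intro i _
              rw [hQrow t (Ico_subset_Icc_self ht) i, mul_zero]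
      rw [h2] at h1
      exact h1.mono_of_mem_nhdsWithin (Icc_mem_nhdsGE_of_mem ht)
    intro t ht
    have := constant_of_has_deriv_right_zero hcont hderiv t ht
    rw [this, hp0_sum]
  exact fun t ht => ⟨hnonneg t ht, hsum t ht⟩
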